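/- Let n ≥ 5 and α₁,…,αₙ ∈ ℂ with α₁ ≠ 0. Then the transposed 0-Poisson algebra TP₀(α₁,…,αₙ) is isomorphic to TP₀(1,0,…,0), i.e., to the structure on μ₀ⁿ with [e₁,e₂] = e₁ and all other basis brackets zero. -/
import Mathlib


open Finset

/-- The null-filiform associative multiplication on `ℂⁿ = Fin n → ℂ`.
The basis vector `e_i` (1-based) corresponds to the coordinate `i - 1`, and
`e_i · e_j = e_{i+j}` if `i + j ≤ n`, and `0` otherwise. -/
noncomputable def nfMul (n : ℕ) (x y : Fin n → ℂ) : Fin n → ℂ :=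
  fun k => ∑ i : Fin n, ∑ j : Fin n,
    if (i : ℕ) + (j : ℕ) + 1 = (k : ℕ) then x i * y j else 0

/-- The 1-based basis vector `e i` of `ℂⁿ` (zero if `i` is out of range `1,…,n`). -/
noncomputable def nfE (n : ℕ) (i : ℕ) : Fin n → ℂ :=
  fun k => if (k : ℕ) + 1 = i then 1 else 0

/-- The coefficient of the basis vector `e i` (1-based) in `x`. -/
noncomputable def nfCoeff (n : ℕ) (x : Fin n → ℂ) (i : ℕ) : ℂ :=
  ∑ k : Fin n, if (k : ℕ) + 1 = i then x k else 0

/-- A Lie bracket (bilinear, alternating, satisfying the Jacobi identity)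
on a complex vector space. -/
structure LieBracketOn (L : Type*) [AddCommGroup L] [Module ℂ L] where
  br : L → L → L
  add_left : ∀ x y z, br (x + y) z = br x z + br y z
  smul_left : ∀ (c : ℂ) (x y : L), br (c • x) y = c • br x y
  add_right : ∀ x y z, br x (y + z) = br x y + br x z
  smul_right : ∀ (c : ℂ) (x y : L), br x (c • y) = c • br x y
  alt : ∀ x, br x x = 0
  jacobi : ∀ x y z, br (br x y) z + br (br y z) x + br (br z x) y = 0

/-- `(μ₀ⁿ, ·, [-,-])` is a transposed `δ`-Poisson algebra:
`δ • (z · [x,y]) = [z·x, y] + [x, z·y]`. -/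
noncomputable def IsTransposedPoisson (n : ℕ) (δ : ℂ) (B : LieBracketOn (Fin n → ℂ)) : Prop :=
  ∀ x y z, δ • nfMul n z (B.br x y) = B.br (nfMul n z x) y + B.br x (nfMul n z y)

/-- `(μ₀ⁿ, ·, [-,-])` is a `δ`-Poisson algebra:
`[x, y·z] = δ • ([x,y]·z + y·[x,z])`. -/
noncomputable def IsDeltaPoisson (n : ℕ) (δ : ℂ) (B : LieBracketOn (Fin n → ℂ)) : Prop :=
  ∀ x y z, B.br x (nfMul n y z) = δ • (nfMul n (B.br x y) z + nfMul n y (B.br x z))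

/-- The bracket of the transposed 0-Poisson algebra `TP₀(α₁,…,αₙ)` on `μ₀ⁿ`:
determined by `[e₁,e₂] = ∑_{t=1}^n αₜ eₜ` and `[eᵢ,eⱼ] = 0` for all other
pairs `i < j`. -/
noncomputable def brTP0 (n : ℕ) (α : ℕ → ℂ) (x y : Fin n → ℂ) : Fin n → ℂ :=
  (nfCoeff n x 1 * nfCoeff n y 2 - nfCoeff n x 2 * nfCoeff n y 1) •
    ∑ t ∈ Finset.Icc 1 n, α t • nfE n t

/-- The bracket of the transposed 1-Poisson algebra `TP₁(α₂,…,αₙ)` on `μ₀ⁿ`: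
determined by `[e₁,eᵢ] = ∑_{t=i}^n α_{t-i+2} eₜ` for `2 ≤ i ≤ n` and
`[eᵢ,eⱼ] = 0` for `2 ≤ i < j ≤ n`. -/
noncomputable def brTP1 (n : ℕ) (α : ℕ → ℂ) (x y : Fin n → ℂ) : Fin n → ℂ :=
  ∑ i ∈ Finset.Icc 2 n,
    (nfCoeff n x 1 * nfCoeff n y i - nfCoeff n x i * nfCoeff n y 1) •
      ∑ t ∈ Finset.Icc i n, α (t + 2 - i) • nfE n t

/-- The bracket of the transposed `δ`-Poisson algebra `TP_δ(a, b, c)`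
(`a = α_{n-2}`, `b = α_{n-1}`, `c = αₙ`) on `μ₀ⁿ`: determined by
`[e₁,e₂] = a e_{n-2} + b e_{n-1} + c eₙ`, `[e₁,e₃] = δ(a e_{n-1} + b eₙ)`,
`[e₂,e₃] = ((δ²-δ)/2) a eₙ`, `[e₁,e₄] = ((δ²+δ)/2) a eₙ`, and `[eᵢ,eⱼ] = 0`
for all other pairs `i < j`. -/
noncomputable def brTPd (n : ℕ) (δ a b c : ℂ) (x y : Fin n → ℂ) : Fin n → ℂ :=
  (nfCoeff n x 1 * nfCoeff n y 2 - nfCoeff n x 2 * nfCoeff n y 1) •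
      (a • nfE n (n-2) + b • nfE n (n-1) + c • nfE n n)
  + (nfCoeff n x 1 * nfCoeff n y 3 - nfCoeff n x 3 * nfCoeff n y 1) •
      (δ • (a • nfE n (n-1) + b • nfE n n))
  + (nfCoeff n x 2 * nfCoeff n y 3 - nfCoeff n x 3 * nfCoeff n y 2) •
      (((δ^2 - δ)/2 * a) • nfE n n)
  + (nfCoeff n x 1 * nfCoeff n y 4 - nfCoeff n x 4 * nfCoeff n y 1) •
      (((δ^2 + δ)/2 * a) • nfE n n)

/-- Two bracket structures on `μ₀ⁿ` are isomorphic (as transposed δ-Poisson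
algebras): there is a linear bijection preserving both `·` and `[-,-]`. -/
noncomputable def TPIso (n : ℕ) (B B' : (Fin n → ℂ) → (Fin n → ℂ) → (Fin n → ℂ)) : Prop :=
  ∃ φ : (Fin n → ℂ) ≃ₗ[ℂ] (Fin n → ℂ),
    (∀ x y, φ (nfMul n x y) = nfMul n (φ x) (φ y)) ∧
    ∀ x y, φ (B x y) = B' (φ x) (φ y)

section Aux

lemma sum_ite_coe {M : Type*} [AddCommMonoid M] {n : ℕ} (m : ℕ) (f : Fin n → M) :
    ∑ k : Fin n, (if (k : ℕ) = m then f k else 0) = if h : m < n then f ⟨m, h⟩ else 0 := by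
  split
  · next h =>
    rw [Finset.sum_eq_single (⟨m, h⟩ : Fin n)]
    · simp
    · intro b _ hb
      rw [if_neg]; intro hb'; exact hb (Fin.ext hb')
    · simp
  · next h =>
    apply Finset.sum_eq_zero
    intro k _
    rw [if_neg]; intro hk; exact h (hk ▸ k.isLt)

lemma nfMul_add_left {n : ℕ} (x x' y : Fin n → ℂ) :
    nfMul n (x + x') y = nfMul n x y + nfMul n x' y := by
  funext k
  simp only [nfMul, Pi.add_apply, ← Finset.sum_add_distrib]
  refine Finset.sum_congr rfl fun i _ => Finset.sum_congr rfl fun j _ => ?_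
  split <;> ring

lemma nfMul_add_right {n : ℕ} (x y y' : Fin n → ℂ) :
    nfMul n x (y + y') = nfMul n x y + nfMul n x y' := by
  funext k
  simp only [nfMul, Pi.add_apply, ← Finset.sum_add_distrib]
  refine Finset.sum_congr rfl fun i _ => Finset.sum_congr rfl fun j _ => ?_
  split <;> ring

lemma nfMul_smul_left {n : ℕ} (c : ℂ) (x y : Fin n → ℂ) :
    nfMul n (c • x) y = c • nfMul n x y := by
  funext k
  simp only [nfMul, Pi.smul_apply, smul_eq_mul, Finset.mul_sum]
  refine Finset.sum_congr rfl fun i _ => Finset.sum_congr rfl fun j _ => ?_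
  split <;> ring

lemma nfMul_smul_right {n : ℕ} (c : ℂ) (x y : Fin n → ℂ) :
    nfMul n x (c • y) = c • nfMul n x y := by
  funext k
  simp only [nfMul, Pi.smul_apply, smul_eq_mul, Finset.mul_sum]
  refine Finset.sum_congr rfl fun i _ => Finset.sum_congr rfl fun j _ => ?_
  split <;> ring

lemma nfMul_zero_left {n : ℕ} (y : Fin n → ℂ) : nfMul n 0 y = 0 := by
  funext k
  refine Finset.sum_eq_zero fun i _ => Finset.sum_eq_zero fun j _ => ?_
  split <;> simp

lemma nfMul_zero_right {n : ℕ} (y : Fin n → ℂ) : nfMul n y 0 = 0 := by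
  funext k
  refine Finset.sum_eq_zero fun i _ => Finset.sum_eq_zero fun j _ => ?_
  split <;> simp

lemma nfMul_left_expand {n : ℕ} (x y z : Fin n → ℂ) (k : Fin n) :
    nfMul n (nfMul n x y) z k
      = ∑ a : Fin n, ∑ b : Fin n, ∑ j : Fin n,
          if (a:ℕ)+(b:ℕ)+(j:ℕ)+2 = (k:ℕ) then x a * y b * z j else 0 := by
  simp only [nfMul]
  have step : ∀ p j : Fin n,
      (if (p:ℕ)+(j:ℕ)+1 = (k:ℕ) then (∑ a : Fin n, ∑ b : Fin n,
          if (a:ℕ)+(b:ℕ)+1 = (p:ℕ) then x a * y b else 0) * z j else 0)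
      = ∑ a : Fin n, ∑ b : Fin n,
          if ((a:ℕ)+(b:ℕ)+1 = (p:ℕ)) ∧ ((p:ℕ)+(j:ℕ)+1 = (k:ℕ)) then x a * y b * z j else 0 := by
    intro p j
    split
    · next h =>
      rw [Finset.sum_mul]
      refine Finset.sum_congr rfl fun a _ => ?_
      rw [Finset.sum_mul]
      refine Finset.sum_congr rfl fun b _ => ?_
      rw [ite_mul, zero_mul]
      split
      · next h2 => rw [if_pos ⟨h2, h⟩]
      · next h2 => rw [if_neg (fun hc => h2 hc.1)]
    · next h =>
      symm
      refine Finset.sum_eq_zero fun a _ => Finset.sum_eq_zero fun b _ => ?_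
      rw [if_neg (fun hc => h hc.2)]
  calc ∑ p : Fin n, ∑ j : Fin n,
        (if (p:ℕ)+(j:ℕ)+1 = (k:ℕ) then (∑ a : Fin n, ∑ b : Fin n,
          if (a:ℕ)+(b:ℕ)+1 = (p:ℕ) then x a * y b else 0) * z j else 0)
      = ∑ p : Fin n, ∑ j : Fin n, ∑ a : Fin n, ∑ b : Fin n,
          if ((a:ℕ)+(b:ℕ)+1 = (p:ℕ)) ∧ ((p:ℕ)+(j:ℕ)+1 = (k:ℕ)) then x a * y b * z j else 0 :=
        Finset.sum_congr rfl fun p _ => Finset.sum_congr rfl fun j _ => step p j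
    _ = ∑ a : Fin n, ∑ b : Fin n, ∑ j : Fin n, ∑ p : Fin n,
          if ((a:ℕ)+(b:ℕ)+1 = (p:ℕ)) ∧ ((p:ℕ)+(j:ℕ)+1 = (k:ℕ)) then x a * y b * z j else 0 := by
        calc ∑ p : Fin n, ∑ j : Fin n, ∑ a : Fin n, ∑ b : Fin n,
              (if ((a:ℕ)+(b:ℕ)+1 = (p:ℕ)) ∧ ((p:ℕ)+(j:ℕ)+1 = (k:ℕ)) then x a * y b * z j else 0)
            = ∑ j : Fin n, ∑ p : Fin n, ∑ a : Fin n, ∑ b : Fin n,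
              (if ((a:ℕ)+(b:ℕ)+1 = (p:ℕ)) ∧ ((p:ℕ)+(j:ℕ)+1 = (k:ℕ)) then x a * y b * z j else 0) :=
              Finset.sum_comm
          _ = ∑ j : Fin n, ∑ a : Fin n, ∑ p : Fin n, ∑ b : Fin n,
              (if ((a:ℕ)+(b:ℕ)+1 = (p:ℕ)) ∧ ((p:ℕ)+(j:ℕ)+1 = (k:ℕ)) then x a * y b * z j else 0) :=
              Finset.sum_congr rfl fun j _ => Finset.sum_comm
          _ = ∑ j : Fin n, ∑ a : Fin n, ∑ b : Fin n, ∑ p : Fin n,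
              (if ((a:ℕ)+(b:ℕ)+1 = (p:ℕ)) ∧ ((p:ℕ)+(j:ℕ)+1 = (k:ℕ)) then x a * y b * z j else 0) :=
              Finset.sum_congr rfl fun j _ => Finset.sum_congr rfl fun a _ => Finset.sum_comm
          _ = ∑ a : Fin n, ∑ j : Fin n, ∑ b : Fin n, ∑ p : Fin n,
              (if ((a:ℕ)+(b:ℕ)+1 = (p:ℕ)) ∧ ((p:ℕ)+(j:ℕ)+1 = (k:ℕ)) then x a * y b * z j else 0) :=
              Finset.sum_comm
          _ = ∑ a : Fin n, ∑ b : Fin n, ∑ j : Fin n, ∑ p : Fin n,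
              (if ((a:ℕ)+(b:ℕ)+1 = (p:ℕ)) ∧ ((p:ℕ)+(j:ℕ)+1 = (k:ℕ)) then x a * y b * z j else 0) :=
              Finset.sum_congr rfl fun a _ => Finset.sum_comm
    _ = ∑ a : Fin n, ∑ b : Fin n, ∑ j : Fin n,
          if (a:ℕ)+(b:ℕ)+(j:ℕ)+2 = (k:ℕ) then x a * y b * z j else 0 := by
        refine Finset.sum_congr rfl fun a _ => Finset.sum_congr rfl fun b _ =>
          Finset.sum_congr rfl fun j _ => ?_
        have h1 : ∀ p : Fin n, (((a:ℕ)+(b:ℕ)+1 = (p:ℕ)) ∧ ((p:ℕ)+(j:ℕ)+1 = (k:ℕ)))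
            ↔ (((p:ℕ) = (a:ℕ)+(b:ℕ)+1) ∧ ((a:ℕ)+(b:ℕ)+(j:ℕ)+2 = (k:ℕ))) := by
          intro p; constructor <;> (rintro ⟨u1, u2⟩; omega)
        simp only [h1]
        have h2 : ∀ p : Fin n, (if (((p:ℕ) = (a:ℕ)+(b:ℕ)+1) ∧ ((a:ℕ)+(b:ℕ)+(j:ℕ)+2 = (k:ℕ)))
              then x a * y b * z j else 0)
            = (if (p:ℕ) = (a:ℕ)+(b:ℕ)+1 then
                (if (a:ℕ)+(b:ℕ)+(j:ℕ)+2 = (k:ℕ) then x a * y b * z j else 0) else 0) := by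
          intro p; split_ifs <;> tauto
        simp only [h2]
        rw [sum_ite_coe ((a:ℕ)+(b:ℕ)+1)
          (fun _ => if (a:ℕ)+(b:ℕ)+(j:ℕ)+2 = (k:ℕ) then x a * y b * z j else 0)]
        split
        · rfl
        · next h =>
          rw [if_neg]
          intro hc
          exact h (by omega)

lemma nfMul_right_expand {n : ℕ} (x y z : Fin n → ℂ) (k : Fin n) :
    nfMul n x (nfMul n y z) k
      = ∑ a : Fin n, ∑ b : Fin n, ∑ j : Fin n,
          if (a:ℕ)+(b:ℕ)+(j:ℕ)+2 = (k:ℕ) then x a * y b * z j else 0 := by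
  simp only [nfMul]
  have step : ∀ a q : Fin n,
      (if (a:ℕ)+(q:ℕ)+1 = (k:ℕ) then x a * (∑ b : Fin n, ∑ j : Fin n,
          if (b:ℕ)+(j:ℕ)+1 = (q:ℕ) then y b * z j else 0) else 0)
      = ∑ b : Fin n, ∑ j : Fin n,
          if ((b:ℕ)+(j:ℕ)+1 = (q:ℕ)) ∧ ((a:ℕ)+(q:ℕ)+1 = (k:ℕ)) then x a * y b * z j else 0 := by
    intro a q
    split
    · next h =>
      rw [Finset.mul_sum]
      refine Finset.sum_congr rfl fun b _ => ?_
      rw [Finset.mul_sum]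
      refine Finset.sum_congr rfl fun j _ => ?_
      rw [mul_ite, mul_zero]
      split
      · next h2 => rw [if_pos ⟨h2, h⟩, mul_assoc]
      · next h2 => rw [if_neg (fun hc => h2 hc.1)]
    · next h =>
      symm
      refine Finset.sum_eq_zero fun b _ => Finset.sum_eq_zero fun j _ => ?_
      rw [if_neg (fun hc => h hc.2)]
  calc ∑ a : Fin n, ∑ q : Fin n,
        (if (a:ℕ)+(q:ℕ)+1 = (k:ℕ) then x a * (∑ b : Fin n, ∑ j : Fin n,
          if (b:ℕ)+(j:ℕ)+1 = (q:ℕ) then y b * z j else 0) else 0)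
      = ∑ a : Fin n, ∑ q : Fin n, ∑ b : Fin n, ∑ j : Fin n,
          if ((b:ℕ)+(j:ℕ)+1 = (q:ℕ)) ∧ ((a:ℕ)+(q:ℕ)+1 = (k:ℕ)) then x a * y b * z j else 0 :=
        Finset.sum_congr rfl fun a _ => Finset.sum_congr rfl fun q _ => step a q
    _ = ∑ a : Fin n, ∑ b : Fin n, ∑ j : Fin n, ∑ q : Fin n,
          if ((b:ℕ)+(j:ℕ)+1 = (q:ℕ)) ∧ ((a:ℕ)+(q:ℕ)+1 = (k:ℕ)) then x a * y b * z j else 0 := by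
        refine Finset.sum_congr rfl fun a _ => ?_
        calc ∑ q : Fin n, ∑ b : Fin n, ∑ j : Fin n,
              (if ((b:ℕ)+(j:ℕ)+1 = (q:ℕ)) ∧ ((a:ℕ)+(q:ℕ)+1 = (k:ℕ)) then x a * y b * z j else 0)
            = ∑ b : Fin n, ∑ q : Fin n, ∑ j : Fin n,
              (if ((b:ℕ)+(j:ℕ)+1 = (q:ℕ)) ∧ ((a:ℕ)+(q:ℕ)+1 = (k:ℕ)) then x a * y b * z j else 0) :=
              Finset.sum_comm
          _ = ∑ b : Fin n, ∑ j : Fin n, ∑ q : Fin n,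
              (if ((b:ℕ)+(j:ℕ)+1 = (q:ℕ)) ∧ ((a:ℕ)+(q:ℕ)+1 = (k:ℕ)) then x a * y b * z j else 0) :=
              Finset.sum_congr rfl fun b _ => Finset.sum_comm
    _ = ∑ a : Fin n, ∑ b : Fin n, ∑ j : Fin n,
          if (a:ℕ)+(b:ℕ)+(j:ℕ)+2 = (k:ℕ) then x a * y b * z j else 0 := by
        refine Finset.sum_congr rfl fun a _ => Finset.sum_congr rfl fun b _ =>
          Finset.sum_congr rfl fun j _ => ?_
        have h1 : ∀ q : Fin n, (((b:ℕ)+(j:ℕ)+1 = (q:ℕ)) ∧ ((a:ℕ)+(q:ℕ)+1 = (k:ℕ)))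
            ↔ (((q:ℕ) = (b:ℕ)+(j:ℕ)+1) ∧ ((a:ℕ)+(b:ℕ)+(j:ℕ)+2 = (k:ℕ))) := by
          intro q; constructor <;> (rintro ⟨u1, u2⟩; omega)
        simp only [h1]
        have h2 : ∀ q : Fin n, (if (((q:ℕ) = (b:ℕ)+(j:ℕ)+1) ∧ ((a:ℕ)+(b:ℕ)+(j:ℕ)+2 = (k:ℕ)))
              then x a * y b * z j else 0)
            = (if (q:ℕ) = (b:ℕ)+(j:ℕ)+1 then
                (if (a:ℕ)+(b:ℕ)+(j:ℕ)+2 = (k:ℕ) then x a * y b * z j else 0) else 0) := by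
          intro q; split_ifs <;> tauto
        simp only [h2]
        rw [sum_ite_coe ((b:ℕ)+(j:ℕ)+1)
          (fun _ => if (a:ℕ)+(b:ℕ)+(j:ℕ)+2 = (k:ℕ) then x a * y b * z j else 0)]
        split
        · rfl
        · next h =>
          rw [if_neg]
          intro hc
          exact h (by omega)

lemma nfMul_assoc {n : ℕ} (x y z : Fin n → ℂ) :
    nfMul n (nfMul n x y) z = nfMul n x (nfMul n y z) := by
  funext k
  rw [nfMul_left_expand, nfMul_right_expand]

lemma nfMul_support {n : ℕ} {x y : Fin n → ℂ} {a b : ℕ}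
    (hx : ∀ i : Fin n, (i:ℕ) < a → x i = 0) (hy : ∀ j : Fin n, (j:ℕ) < b → y j = 0)
    {k : Fin n} (hk : (k:ℕ) < a + b + 1) : nfMul n x y k = 0 := by
  refine Finset.sum_eq_zero fun i _ => Finset.sum_eq_zero fun j _ => ?_
  split
  · next h =>
    by_cases hi : (i:ℕ) < a
    · rw [hx i hi, zero_mul]
    · rw [hy j (by omega), mul_zero]
  · rfl

noncomputable def pw (n : ℕ) (w : Fin n → ℂ) : ℕ → (Fin n → ℂ)
  | 0 => w
  | t + 1 => nfMul n w (pw n w t)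

lemma pw_support {n : ℕ} (w : Fin n → ℂ) : ∀ t : ℕ, ∀ k : Fin n, (k:ℕ) < t → pw n w t k = 0 := by
  intro t
  induction t with
  | zero => intro k hk; omega
  | succ t ih =>
    intro k hk
    exact nfMul_support (a := 0) (b := t) (fun i hi => by omega) ih (by omega)

lemma pw_eq_zero {n : ℕ} (w : Fin n → ℂ) {t : ℕ} (ht : n ≤ t) : pw n w t = 0 := by
  funext k
  exact pw_support w t k (lt_of_lt_of_le k.isLt ht)

lemma pw_mul {n : ℕ} (w : Fin n → ℂ) (s t : ℕ) :
    nfMul n (pw n w s) (pw n w t) = pw n w (s + t + 1) := by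
  induction s generalizing t with
  | zero => rw [show 0 + t + 1 = t + 1 from by omega]; rfl
  | succ s ih =>
    show nfMul n (nfMul n w (pw n w s)) (pw n w t) = _
    rw [nfMul_assoc, ih, show s + 1 + t + 1 = (s + t + 1) + 1 from by omega]
    rfl

lemma pw_diag {n : ℕ} (w : Fin n → ℂ) (h0 : 0 < n) :
    ∀ t : ℕ, ∀ (h : t < n), pw n w t ⟨t, h⟩ = (w ⟨0, h0⟩) ^ (t + 1) := by
  intro t
  induction t with
  | zero => intro h; simp [pw]
  | succ t ih =>
    intro h
    show nfMul n w (pw n w t) ⟨t+1, h⟩ = _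
    rw [show nfMul n w (pw n w t) ⟨t+1, h⟩ = ∑ i : Fin n, ∑ j : Fin n,
      (if (i:ℕ)+(j:ℕ)+1 = t+1 then w i * pw n w t j else 0) from rfl]
    rw [Finset.sum_eq_single (⟨0, h0⟩ : Fin n)]
    · rw [Finset.sum_eq_single (⟨t, by omega⟩ : Fin n)]
      · rw [if_pos (by simp), ih (by omega)]
        ring
      · intro j _ hj
        split
        · next hc =>
          have : (j:ℕ) < t := by
            rcases Nat.lt_or_ge (j:ℕ) t with h'|h'
            · exact h'
            · exfalso; apply hj; apply Fin.ext; simp at hc ⊢; omega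
          rw [pw_support w t j this, mul_zero]
        · rfl
      · simp
    · intro i _ hi
      refine Finset.sum_eq_zero fun j _ => ?_
      split
      · next hc =>
        have hi' : 0 < (i:ℕ) := by
          rcases Nat.eq_zero_or_pos (i:ℕ) with h'|h'
          · exact absurd (Fin.ext h') hi
          · exact h'
        rw [pw_support w t j (by omega), mul_zero]
      · rfl
    · simp

noncomputable def phiFun (n : ℕ) (w : Fin n → ℂ) (x : Fin n → ℂ) : Fin n → ℂ :=
  ∑ t : Fin n, x t • pw n w (t : ℕ)

lemma nfMul_sum_left {n : ℕ} {ι : Type*} (s : Finset ι) (f : ι → Fin n → ℂ) (y : Fin n → ℂ) :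
    nfMul n (∑ i ∈ s, f i) y = ∑ i ∈ s, nfMul n (f i) y := by
  induction s using Finset.cons_induction with
  | empty => simp [nfMul_zero_left]
  | cons a s ha ih => rw [Finset.sum_cons, nfMul_add_left, ih, Finset.sum_cons]

lemma nfMul_sum_right {n : ℕ} {ι : Type*} (s : Finset ι) (f : ι → Fin n → ℂ) (y : Fin n → ℂ) :
    nfMul n y (∑ i ∈ s, f i) = ∑ i ∈ s, nfMul n y (f i) := by
  induction s using Finset.cons_induction with
  | empty => simp [nfMul_zero_right]
  | cons a s ha ih => rw [Finset.sum_cons, nfMul_add_right, ih, Finset.sum_cons]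

lemma phi_mul {n : ℕ} (w : Fin n → ℂ) (x y : Fin n → ℂ) :
    phiFun n w (nfMul n x y) = nfMul n (phiFun n w x) (phiFun n w y) := by
  rw [phiFun, phiFun, phiFun, nfMul_sum_left]
  have rhs : ∀ s : Fin n, nfMul n (x s • pw n w (s:ℕ)) (∑ t : Fin n, y t • pw n w (t:ℕ))
      = ∑ t : Fin n, (x s * y t) • pw n w ((s:ℕ) + (t:ℕ) + 1) := by
    intro s
    rw [nfMul_sum_right]
    refine Finset.sum_congr rfl fun t _ => ?_
    rw [nfMul_smul_left, nfMul_smul_right, pw_mul, smul_smul]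
  rw [Finset.sum_congr rfl fun s _ => rhs s]
  have lhs : ∀ k : Fin n, nfMul n x y k • pw n w (k:ℕ)
      = ∑ s : Fin n, ∑ t : Fin n,
          (if (s:ℕ)+(t:ℕ)+1 = (k:ℕ) then (x s * y t) • pw n w (k:ℕ) else 0) := by
    intro k
    rw [show nfMul n x y k = ∑ s : Fin n, ∑ t : Fin n,
      (if (s:ℕ)+(t:ℕ)+1 = (k:ℕ) then x s * y t else 0) from rfl]
    rw [Finset.sum_smul]
    refine Finset.sum_congr rfl fun s _ => ?_
    rw [Finset.sum_smul]
    refine Finset.sum_congr rfl fun t _ => ?_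
    rw [ite_smul, zero_smul]
  rw [Finset.sum_congr rfl fun k _ => lhs k]
  calc ∑ k : Fin n, ∑ s : Fin n, ∑ t : Fin n,
        (if (s:ℕ)+(t:ℕ)+1 = (k:ℕ) then (x s * y t) • pw n w (k:ℕ) else 0)
      = ∑ s : Fin n, ∑ k : Fin n, ∑ t : Fin n,
        (if (s:ℕ)+(t:ℕ)+1 = (k:ℕ) then (x s * y t) • pw n w (k:ℕ) else 0) := Finset.sum_comm
    _ = ∑ s : Fin n, ∑ t : Fin n, ∑ k : Fin n,
        (if (s:ℕ)+(t:ℕ)+1 = (k:ℕ) then (x s * y t) • pw n w (k:ℕ) else 0) :=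
        Finset.sum_congr rfl fun s _ => Finset.sum_comm
    _ = ∑ s : Fin n, ∑ t : Fin n, (x s * y t) • pw n w ((s:ℕ) + (t:ℕ) + 1) := by
        refine Finset.sum_congr rfl fun s _ => Finset.sum_congr rfl fun t _ => ?_
        have he : ∀ k : Fin n, (if (s:ℕ)+(t:ℕ)+1 = (k:ℕ) then (x s * y t) • pw n w (k:ℕ) else 0)
            = (if (k:ℕ) = (s:ℕ)+(t:ℕ)+1 then (x s * y t) • pw n w (k:ℕ) else 0) := by
          intro k; split_ifs <;> first | rfl | omega
        rw [Finset.sum_congr rfl fun k _ => he k,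
          sum_ite_coe ((s:ℕ)+(t:ℕ)+1) (fun k : Fin n => (x s * y t) • pw n w (k:ℕ))]
        split
        · rfl
        · next h =>
          rw [pw_eq_zero w (by omega), smul_zero]

lemma phiFun_apply {n : ℕ} (w x : Fin n → ℂ) (k : Fin n) :
    phiFun n w x k = ∑ t : Fin n, x t * pw n w (t : ℕ) k := by
  rw [phiFun, Finset.sum_apply]
  rfl

lemma phiFun_apply_zero {n : ℕ} (w x : Fin n → ℂ) (h0 : 0 < n) :
    phiFun n w x ⟨0, h0⟩ = x ⟨0, h0⟩ * w ⟨0, h0⟩ := by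
  rw [phiFun_apply, Finset.sum_eq_single (⟨0, h0⟩ : Fin n)]
  · rfl
  · intro t _ ht
    have : (0:ℕ) < (t:ℕ) := by
      rcases Nat.eq_zero_or_pos (t:ℕ) with h|h
      · exact absurd (Fin.ext h) ht
      · exact h
    rw [pw_support w (t:ℕ) ⟨0, h0⟩ this, mul_zero]
  · simp

lemma phiFun_apply_one {n : ℕ} (w x : Fin n → ℂ) (h1 : 1 < n) :
    phiFun n w x ⟨1, h1⟩
      = x ⟨0, by omega⟩ * w ⟨1, h1⟩ + x ⟨1, h1⟩ * (w ⟨0, by omega⟩)^2 := by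
  rw [phiFun_apply]
  have split : ∀ t : Fin n, x t * pw n w (t:ℕ) ⟨1, h1⟩
      = (if (t:ℕ) = 0 then x t * pw n w (t:ℕ) ⟨1, h1⟩ else 0)
        + (if (t:ℕ) = 1 then x t * pw n w (t:ℕ) ⟨1, h1⟩ else 0) := by
    intro t
    rcases Nat.lt_or_ge (t:ℕ) 2 with h|h
    · interval_cases h' : (t:ℕ) <;> simp [h']
    · rw [if_neg (by omega), if_neg (by omega),
        pw_support w (t:ℕ) ⟨1, h1⟩ (show (1:ℕ) < (t:ℕ) by omega), mul_zero, add_zero]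
  rw [Finset.sum_congr rfl fun t _ => split t, Finset.sum_add_distrib,
    sum_ite_coe 0 (fun t : Fin n => x t * pw n w (t:ℕ) ⟨1, h1⟩),
    sum_ite_coe 1 (fun t : Fin n => x t * pw n w (t:ℕ) ⟨1, h1⟩),
    dif_pos (by omega : 0 < n), dif_pos h1]
  have e1 : pw n w ((⟨0, by omega⟩ : Fin n) : ℕ) ⟨1, h1⟩ = w ⟨1, h1⟩ := rfl
  have e2 : pw n w ((⟨1, h1⟩ : Fin n) : ℕ) ⟨1, h1⟩ = (w ⟨0, by omega⟩)^2 :=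
    pw_diag w (by omega) 1 h1
  rw [e1, e2]

lemma phiFun_inj {n : ℕ} (w : Fin n → ℂ) (h0 : 0 < n) (hw : w ⟨0, h0⟩ ≠ 0)
    (x : Fin n → ℂ) (hx : phiFun n w x = 0) : x = 0 := by
  have key : ∀ m : ℕ, ∀ k : Fin n, (k:ℕ) = m → x k = 0 := by
    intro m
    induction m using Nat.strong_induction_on with
    | _ m ih =>
      intro k hk
      have h := congrFun hx k
      rw [phiFun_apply, Pi.zero_apply] at h
      rw [Finset.sum_eq_single k] at h
      · have hd : pw n w (k:ℕ) k = (w ⟨0, h0⟩) ^ ((k:ℕ) + 1) := by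
          have := pw_diag w h0 (k:ℕ) k.isLt
          rwa [Fin.eta] at this
        rw [hd] at h
        exact (mul_eq_zero.mp h).resolve_right (pow_ne_zero _ hw)
      · intro t _ ht
        rcases Nat.lt_trichotomy (t:ℕ) (k:ℕ) with h'|h'|h'
        · rw [ih (t:ℕ) (by omega) t rfl, zero_mul]
        · exact absurd (Fin.ext h') ht
        · rw [pw_support w (t:ℕ) k h', mul_zero]
      · simp
  funext k
  rw [key (k:ℕ) k rfl]
  rfl

lemma pw_update {n : ℕ} (w : Fin n → ℂ) {m : ℕ} (hm : m < n) (δ : ℂ) :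
    ∀ t : ℕ, ∀ k : Fin n, (k:ℕ) ≤ m →
      pw n (Function.update w ⟨m, hm⟩ (w ⟨m, hm⟩ + δ)) t k
        = pw n w t k + (if t = 0 ∧ (k:ℕ) = m then δ else 0) := by
  set w' := Function.update w ⟨m, hm⟩ (w ⟨m, hm⟩ + δ) with hw'
  have hbase : ∀ i : Fin n, (i:ℕ) ≠ m → w' i = w i := by
    intro i hi
    exact Function.update_of_ne (fun h => hi (by rw [h])) _ w
  intro t
  induction t with
  | zero =>
    intro k hk
    show w' k = w k + (if (0:ℕ) = 0 ∧ (k:ℕ) = m then δ else 0)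
    rcases eq_or_ne (k:ℕ) m with h|h
    · have : k = ⟨m, hm⟩ := Fin.ext h
      subst this
      rw [if_pos ⟨rfl, h⟩, hw', Function.update_self]
    · rw [hbase k h, if_neg (fun hc => h hc.2), add_zero]
  | succ t ih =>
    intro k hk
    rw [if_neg (by simp), add_zero]
    show nfMul n w' (pw n w' t) k = nfMul n w (pw n w t) k
    refine Finset.sum_congr rfl fun i _ => Finset.sum_congr rfl fun j _ => ?_
    split
    · next h =>
      have hi : (i:ℕ) < m := by omega
      have hj : (j:ℕ) < m := by omega
      rw [hbase i (by omega), ih j (by omega), if_neg (fun hc => by omega), add_zero]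
    · rfl

lemma exists_good {n : ℕ} (h0 : 0 < n) (α : ℕ → ℂ) (a : ℂ)
    (ha : a ^ 2 = α 1) (ha0 : a ≠ 0) :
    ∃ w : Fin n → ℂ, w ⟨0, h0⟩ = a ∧ ∀ k : Fin n,
      phiFun n w (fun t => α ((t:ℕ)+1)) k = (if (k:ℕ) = 0 then a^3 else 0) := by
  have hα1 : α 1 ≠ 0 := by rw [← ha]; exact pow_ne_zero _ ha0
  have main : ∀ m : ℕ, ∃ w : Fin n → ℂ, w ⟨0, h0⟩ = a ∧ ∀ k : Fin n, (k:ℕ) < m →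
      phiFun n w (fun t => α ((t:ℕ)+1)) k = (if (k:ℕ) = 0 then a^3 else 0) := by
    intro m
    induction m with
    | zero => exact ⟨fun k => if (k:ℕ) = 0 then a else 0, by simp, fun k hk => by omega⟩
    | succ m ih =>
      obtain ⟨w, hw0, hw⟩ := ih
      rcases Nat.lt_or_ge m n with hmn|hmn
      · rcases Nat.eq_zero_or_pos m with rfl|hm1
        · refine ⟨w, hw0, fun k hk => ?_⟩
          have hk0 : (k:ℕ) = 0 := by omega
          have : k = ⟨0, h0⟩ := Fin.ext hk0
          subst this
          rw [phiFun_apply, if_pos hk0]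
          rw [Finset.sum_eq_single (⟨0, h0⟩ : Fin n)]
          · show α 1 * w ⟨0, h0⟩ = a ^ 3
            rw [hw0, ← ha]; ring
          · intro t _ ht
            have : (0:ℕ) < (t:ℕ) := by
              rcases Nat.eq_zero_or_pos (t:ℕ) with h|h
              · exact absurd (Fin.ext h) ht
              · exact h
            rw [pw_support w (t:ℕ) ⟨0, h0⟩ this, mul_zero]
          · simp
        · set S := phiFun n w (fun t => α ((t:ℕ)+1)) ⟨m, hmn⟩ with hS
          set δ := -S / α 1 with hδ
          set w' := Function.update w ⟨m, hmn⟩ (w ⟨m, hmn⟩ + δ) with hw'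
          have hupd := pw_update w hmn δ
          refine ⟨w', ?_, ?_⟩
          · show w' ⟨0, h0⟩ = a
            rw [hw', Function.update_of_ne
              (by intro h; exact absurd (congrArg Fin.val h) (by simp; omega)) _ w]
            exact hw0
          · intro k hk
            rcases Nat.lt_or_ge (k:ℕ) m with hkm|hkm
            · rw [phiFun_apply]
              have he : ∀ t : Fin n, α ((t:ℕ)+1) * pw n w' (t:ℕ) k
                  = α ((t:ℕ)+1) * pw n w (t:ℕ) k := by
                intro t
                rw [hupd (t:ℕ) k (by omega), if_neg (fun hc => by omega), add_zero]
              rw [Finset.sum_congr rfl fun t _ => he t, ← phiFun_apply]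
              exact hw k hkm
            · have hkm' : (k:ℕ) = m := by omega
              have hke : k = ⟨m, hmn⟩ := Fin.ext hkm'
              rw [if_neg (by omega), phiFun_apply]
              have he : ∀ t : Fin n, α ((t:ℕ)+1) * pw n w' (t:ℕ) k
                  = α ((t:ℕ)+1) * pw n w (t:ℕ) k + (if (t:ℕ) = 0 then α 1 * δ else 0) := by
                intro t
                rw [hupd (t:ℕ) k (by omega), mul_add]
                by_cases h : (t:ℕ) = 0
                · rw [if_pos ⟨h, hkm'⟩, if_pos h, h]
                · rw [if_neg (fun hc => h hc.1), if_neg h, mul_zero]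
              rw [Finset.sum_congr rfl fun t _ => he t, Finset.sum_add_distrib,
                sum_ite_coe 0 (fun _ : Fin n => α 1 * δ), dif_pos h0, ← phiFun_apply, hke]
              rw [← hS, hδ]
              field_simp
              ring
      · exact ⟨w, hw0, fun k hk => hw k (by omega)⟩
  obtain ⟨w, hw0, hw⟩ := main n
  exact ⟨w, hw0, fun k => hw k k.isLt⟩

lemma nfCoeff_one {n : ℕ} (h0 : 0 < n) (x : Fin n → ℂ) : nfCoeff n x 1 = x ⟨0, h0⟩ := by
  rw [nfCoeff]
  have he : ∀ k : Fin n, (if (k:ℕ)+1 = 1 then x k else 0) = (if (k:ℕ) = 0 then x k else 0) :=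
    fun k => if_congr (by omega) rfl rfl
  rw [Finset.sum_congr rfl fun k _ => he k, sum_ite_coe 0 x, dif_pos h0]

lemma nfCoeff_two {n : ℕ} (h1 : 1 < n) (x : Fin n → ℂ) : nfCoeff n x 2 = x ⟨1, h1⟩ := by
  rw [nfCoeff]
  have he : ∀ k : Fin n, (if (k:ℕ)+1 = 2 then x k else 0) = (if (k:ℕ) = 1 then x k else 0) :=
    fun k => if_congr (by omega) rfl rfl
  rw [Finset.sum_congr rfl fun k _ => he k, sum_ite_coe 1 x, dif_pos h1]

lemma vIcc {n : ℕ} (α : ℕ → ℂ) (k : Fin n) :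
    (∑ t ∈ Finset.Icc 1 n, α t • nfE n t) k = α ((k:ℕ)+1) := by
  rw [Finset.sum_apply]
  have he : ∀ t ∈ Finset.Icc 1 n, (α t • nfE n t) k = (if t = (k:ℕ)+1 then α t else 0) := by
    intro t _
    rw [Pi.smul_apply, nfE, smul_eq_mul]
    by_cases h : (k:ℕ)+1 = t
    · rw [if_pos h, if_pos h.symm, mul_one]
    · rw [if_neg h, if_neg (fun hc => h hc.symm), mul_zero]
  rw [Finset.sum_congr rfl he, Finset.sum_ite_eq' (Finset.Icc 1 n) ((k:ℕ)+1) α,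
    if_pos (by rw [Finset.mem_Icc]; exact ⟨by omega, by omega⟩)]

end Aux

/-- for `n ≥ 5` and `α₁ ≠ 0`, `TP₀(α₁,…,αₙ)` is isomorphic to
`TP₀(1,0,…,0)`. -/


theorem stmt_7 (n : ℕ) (hn : 5 ≤ n) (α : ℕ → ℂ) (hα : α 1 ≠ 0) :
    TPIso n (brTP0 n α) (brTP0 n fun t => if t = 1 then 1 else 0) := by
  have h0 : 0 < n := by omega
  have h1 : 1 < n := by omega
  obtain ⟨a, ha⟩ := IsAlgClosed.exists_pow_nat_eq (α 1) two_pos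
  have ha0 : a ≠ 0 := by
    intro h
    apply hα
    rw [← ha, h]
    ring
  obtain ⟨w, hw0, hwS⟩ := exists_good h0 α a ha ha0
  set φL : (Fin n → ℂ) →ₗ[ℂ] (Fin n → ℂ) :=
    { toFun := phiFun n w
      map_add' := by
        intro x y
        simp only [phiFun, Pi.add_apply, add_smul, Finset.sum_add_distrib]
      map_smul' := by
        intro c x
        simp only [phiFun, Pi.smul_apply, smul_eq_mul, RingHom.id_apply, mul_smul]
        rw [Finset.smul_sum] } with hφL
  have hwa : w ⟨0, h0⟩ ≠ 0 := by rw [hw0]; exact ha0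
  have hinj : Function.Injective φL := by
    rw [← LinearMap.ker_eq_bot]
    rw [LinearMap.ker_eq_bot']
    intro x hx
    exact phiFun_inj w h0 hwa x hx
  have hsurj : Function.Surjective φL := (LinearMap.injective_iff_surjective).mp hinj
  refine ⟨LinearEquiv.ofBijective φL ⟨hinj, hsurj⟩, fun x y => phi_mul w x y, fun x y => ?_⟩
  show phiFun n w (brTP0 n α x y) = brTP0 n (fun t => if t = 1 then 1 else 0)
    (phiFun n w x) (phiFun n w y)
  have c1 : ∀ z : Fin n → ℂ, nfCoeff n (phiFun n w z) 1 = z ⟨0, h0⟩ * a := by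
    intro z
    rw [nfCoeff_one h0, phiFun_apply_zero w z h0, hw0]
  have c2 : ∀ z : Fin n → ℂ, nfCoeff n (phiFun n w z) 2
      = z ⟨0, h0⟩ * w ⟨1, h1⟩ + z ⟨1, h1⟩ * a^2 := by
    intro z
    rw [nfCoeff_two h1, phiFun_apply_one w z h1, hw0]
  rw [brTP0, brTP0]
  have hmap : phiFun n w ((nfCoeff n x 1 * nfCoeff n y 2 - nfCoeff n x 2 * nfCoeff n y 1) •
      ∑ t ∈ Finset.Icc 1 n, α t • nfE n t)
      = (nfCoeff n x 1 * nfCoeff n y 2 - nfCoeff n x 2 * nfCoeff n y 1) •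
        phiFun n w (∑ t ∈ Finset.Icc 1 n, α t • nfE n t) := map_smul φL _ _
  rw [hmap]
  have hv : (∑ t ∈ Finset.Icc 1 n, α t • nfE n t) = (fun t : Fin n => α ((t:ℕ)+1)) := by
    funext k
    exact vIcc α k
  rw [hv]
  funext k
  rw [Pi.smul_apply, Pi.smul_apply, smul_eq_mul, smul_eq_mul, hwS k]
  rw [c1 x, c1 y, c2 x, c2 y, nfCoeff_one h0 x, nfCoeff_one h0 y,
    nfCoeff_two h1 x, nfCoeff_two h1 y]
  rw [vIcc (fun t => if t = 1 then (1:ℂ) else 0) k]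
  by_cases hk : (k:ℕ) = 0
  · rw [if_pos hk, if_pos (by omega : (k:ℕ)+1 = 1)]
    ring
  · rw [if_neg hk, if_neg (by omega : ¬((k:ℕ)+1 = 1))]
    ring
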